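/- arXiv:1502.04784 — 2 statements merged into one kernel-verified Lean document; each statement's English description precedes it below -/
import Mathlib

section
/- Let G₁ and G₂ be finite groups such that there is an order isomorphism between the posets Iso(G₁) and Iso(G₂). If |G₁| = p₁^{α₁} p₂^{α₂} ⋯ p_k^{α_k} with p₁, ..., p_k distinct primes and each α_i ≥ 1, then there exist distinct primes q₁, ..., q_k such that |G₂| = q₁^{α₁} q₂^{α₂} ⋯ q_k^{α_k}; equivalently, there is a bijection σ between the set of prime divisors of |G₁| and the set of prime divisors of |G₂| such that for every prime p dividing |G₁|, the multiplicity of p in the factorization of |G₁| equals the multiplicity of σ(p) in the factorization of |G₂|. -/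
/-- The setoid on subgroups of `G` given by group isomorphism. -/
def isoSetoid (G : Type*) [Group G] : Setoid (Subgroup G) where
  r H K := Nonempty (H ≃* K)
  iseqv := ⟨fun H => ⟨MulEquiv.refl H⟩, fun ⟨e⟩ => ⟨e.symm⟩, fun ⟨e⟩ ⟨f⟩ => ⟨e.trans f⟩⟩

/-- `IsoClasses G` is the set of equivalence classes of subgroups of `G`
under group isomorphism. -/
def IsoClasses (G : Type*) [Group G] : Type _ := Quotient (isoSetoid G)

/-- The class of a subgroup `H` in `IsoClasses G`. -/
def IsoCls {G : Type*} [Group G] (H : Subgroup G) : IsoClasses G :=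
  Quotient.mk (isoSetoid G) H

/-- `[H] ≤ [K]` iff some member of `[H]` is contained in some member of `[K]`. -/
instance instLEIsoClasses (G : Type*) [Group G] : LE (IsoClasses G) where
  le x y := ∃ H K : Subgroup G, IsoCls H = x ∧ IsoCls K = y ∧ H ≤ K

/-! ### Auxiliary order-theoretic notions -/

section OrderTheory

variable {β γ : Type*} [LE β] [LE γ]

/-- `x` is a bottom element. -/
def IsBotEl (x : β) : Prop := ∀ y, x ≤ y

/-- `a` is an atom: not a bottom element, and everything below it is a bottom
element or equal to it. -/
def IsAt (a : β) : Prop := ¬ IsBotEl a ∧ ∀ x, x ≤ a → IsBotEl x ∨ x = a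

/-- `x` lies above the atom `a` and above no other atom. -/
def PureAbove (a x : β) : Prop := a ≤ x ∧ ∀ b, IsAt b → b ≤ x → b = a

/-- There is a strict chain of length `m` of elements pure above `a`. -/
def HasChain (a : β) (m : ℕ) : Prop :=
  ∃ c : Fin m → β, (∀ i j : Fin m, i < j → c i ≤ c j ∧ c i ≠ c j) ∧ ∀ i, PureAbove a (c i)

theorem isBotEl_map (f : β ≃o γ) (x : β) : IsBotEl (f x) ↔ IsBotEl x := by
  constructor
  · intro h y
    exact f.map_rel_iff.mp (h (f y))
  · intro h y
    have h2 := f.map_rel_iff.mpr (h (f.symm y))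
    rwa [f.apply_symm_apply] at h2

theorem isAt_map (f : β ≃o γ) {a : β} (ha : IsAt a) : IsAt (f a) := by
  refine ⟨fun hb => ha.1 ((isBotEl_map f a).mp hb), fun x hx => ?_⟩
  have hx' : f.symm x ≤ a := by
    refine f.map_rel_iff.mp ?_
    rwa [f.apply_symm_apply]
  rcases ha.2 _ hx' with hb | hb
  · left
    have h2 := (isBotEl_map f (f.symm x)).mpr hb
    rwa [f.apply_symm_apply] at h2
  · right
    rw [← hb]
    exact (f.apply_symm_apply x).symm

theorem pureAbove_map (f : β ≃o γ) {a x : β} (h : PureAbove a x) :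
    PureAbove (f a) (f x) := by
  refine ⟨f.map_rel_iff.mpr h.1, fun b hb hbx => ?_⟩
  have hb' : IsAt (f.symm b) := isAt_map f.symm hb
  have hbx' : f.symm b ≤ x := by
    refine f.map_rel_iff.mp ?_
    rwa [f.apply_symm_apply]
  have h2 := h.2 _ hb' hbx'
  rw [← h2]
  exact (f.apply_symm_apply b).symm

theorem hasChain_map (f : β ≃o γ) {a : β} {m : ℕ} (h : HasChain a m) :
    HasChain (f a) m := by
  obtain ⟨c, h1, h2⟩ := h
  exact ⟨fun i => f (c i),
    fun i j hij => ⟨f.map_rel_iff.mpr (h1 i j hij).1,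
      fun he => (h1 i j hij).2 (f.injective he)⟩,
    fun i => pureAbove_map f (h2 i)⟩

end OrderTheory

/-! ### A numeric helper -/

theorem eq_pow_factorization_of_unique_prime {n q : ℕ} (hn : n ≠ 0) (hq : q.Prime)
    (h : ∀ r : ℕ, r.Prime → r ∣ n → r = q) : n = q ^ n.factorization q := by
  have hsub : n.factorization.support ⊆ {q} := by
    intro r hr
    rw [Nat.support_factorization] at hr
    simp only [Finset.mem_singleton]
    exact h r (Nat.prime_of_mem_primeFactors hr) (Nat.dvd_of_mem_primeFactors hr)
  conv_lhs => rw [← Nat.factorization_prod_pow_eq_self hn]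
  rw [Finsupp.prod]
  rw [Finset.prod_subset hsub (fun x _ hx => by
    rw [Finsupp.notMem_support_iff.mp hx, pow_zero]), Finset.prod_singleton]

/-! ### Facts about `IsoClasses` -/

section IsoClassesFacts

open Subgroup

variable {G : Type*} [Group G]

/-- The cardinality of (any representative of) an isomorphism class. -/
noncomputable def clsCard : IsoClasses G → ℕ :=
  Quotient.lift (fun H : Subgroup G => Nat.card H)
    (fun _ _ ⟨e⟩ => Nat.card_congr e.toEquiv)

@[simp] theorem clsCard_mk (H : Subgroup G) : clsCard (IsoCls H) = Nat.card H := rfl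

theorem exists_isoCls (x : IsoClasses G) : ∃ H : Subgroup G, IsoCls H = x :=
  Quot.exists_rep x

theorem card_eq_of_isoCls_eq {H K : Subgroup G} (h : IsoCls H = IsoCls K) :
    Nat.card H = Nat.card K := by
  obtain ⟨e⟩ := Quotient.exact h
  exact Nat.card_congr e.toEquiv

theorem isoCls_le {H K : Subgroup G} (h : H ≤ K) : IsoCls H ≤ IsoCls K :=
  ⟨H, K, rfl, rfl, h⟩

theorem isoCls_eq_of_prime {H K : Subgroup G} {q : ℕ} (hq : q.Prime)
    (h1 : Nat.card H = q) (h2 : Nat.card K = q) : IsoCls H = IsoCls K := by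
  haveI : Fact q.Prime := ⟨hq⟩
  exact Quotient.sound ⟨mulEquivOfPrimeCardEq h1 h2⟩

theorem clsCard_dvd_of_le {x y : IsoClasses G} (h : x ≤ y) : clsCard x ∣ clsCard y := by
  obtain ⟨H, K, hH, hK, hle⟩ := h
  rw [← hH, ← hK, clsCard_mk, clsCard_mk]
  exact Subgroup.card_dvd_of_le hle

variable [Finite G]

theorem clsCard_ne_zero (x : IsoClasses G) : clsCard x ≠ 0 := by
  obtain ⟨H, rfl⟩ := exists_isoCls x
  rw [clsCard_mk]
  exact Nat.card_pos.ne'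

theorem clsCard_dvd_card (x : IsoClasses G) : clsCard x ∣ Nat.card G := by
  obtain ⟨H, rfl⟩ := exists_isoCls x
  rw [clsCard_mk]
  exact Subgroup.card_subgroup_dvd_card H

theorem eq_of_le_of_clsCard_le {x y : IsoClasses G} (h : x ≤ y)
    (hc : clsCard y ≤ clsCard x) : x = y := by
  obtain ⟨H, K, hH, hK, hle⟩ := h
  rw [← hH, ← hK] at hc ⊢
  rw [clsCard_mk, clsCard_mk] at hc
  exact congrArg IsoCls (Subgroup.eq_of_le_of_card_ge hle hc)

theorem isBotEl_iff {x : IsoClasses G} : IsBotEl x ↔ x = IsoCls (⊥ : Subgroup G) := by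
  constructor
  · intro h
    have h2 := clsCard_dvd_of_le (h (IsoCls (⊥ : Subgroup G)))
    rw [clsCard_mk, Subgroup.card_bot, Nat.dvd_one] at h2
    obtain ⟨H, rfl⟩ := exists_isoCls x
    rw [clsCard_mk, Subgroup.card_eq_one] at h2
    rw [h2]
  · rintro rfl y
    obtain ⟨K, rfl⟩ := exists_isoCls y
    exact isoCls_le bot_le

theorem isAt_of_prime {H : Subgroup G} {q : ℕ} (hq : q.Prime) (hH : Nat.card H = q) :
    IsAt (IsoCls H) := by
  constructor
  · intro hbot
    rw [isBotEl_iff] at hbot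
    have := card_eq_of_isoCls_eq hbot
    rw [hH, Subgroup.card_bot] at this
    exact hq.one_lt.ne' this
  · intro x hx
    obtain ⟨A, B, hA, hB, hAB⟩ := hx
    have hcB : Nat.card B = q := by
      rw [← hH]; exact card_eq_of_isoCls_eq hB
    have hdvd : Nat.card A ∣ q := hcB ▸ Subgroup.card_dvd_of_le hAB
    rcases (Nat.Prime.eq_one_or_self_of_dvd hq _ hdvd) with h1 | h1
    · left
      rw [isBotEl_iff, ← hA, Subgroup.card_eq_one.mp h1]
    · right
      have : A = B := Subgroup.eq_of_le_of_card_ge hAB (by rw [hcB, h1])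
      rw [← hA, this, hB]

theorem exists_prime_of_isAt {a : IsoClasses G} (ha : IsAt a) :
    ∃ (H : Subgroup G) (q : ℕ), q.Prime ∧ Nat.card H = q ∧ IsoCls H = a := by
  obtain ⟨K, rfl⟩ := exists_isoCls a
  have hK1 : Nat.card K ≠ 1 := by
    intro h1
    refine ha.1 ?_
    rw [isBotEl_iff, Subgroup.card_eq_one.mp h1]
  obtain ⟨q, hq, hdvd⟩ := Nat.exists_prime_and_dvd hK1
  haveI : Fact q.Prime := ⟨hq⟩
  obtain ⟨y, hy⟩ := exists_prime_orderOf_dvd_card' (G := K) q hdvd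
  have hLK : Subgroup.zpowers (y : G) ≤ K := Subgroup.zpowers_le.mpr y.2
  have hcL : Nat.card (Subgroup.zpowers (y : G)) = q := by
    rw [Nat.card_zpowers, Subgroup.orderOf_coe, hy]
  rcases ha.2 _ (isoCls_le hLK) with hb | hb
  · exfalso
    rw [isBotEl_iff] at hb
    have := card_eq_of_isoCls_eq hb
    rw [hcL, Subgroup.card_bot] at this
    exact hq.one_lt.ne' this
  · exact ⟨Subgroup.zpowers (y : G), q, hq, hcL, hb⟩

/-- Any subgroup of order `q` dividing the order of `K` embeds as a class below `[K]`. -/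
theorem cls_le_of_prime_dvd {H K : Subgroup G} {q : ℕ} (hq : q.Prime)
    (hH : Nat.card H = q) (hdvd : q ∣ Nat.card K) : IsoCls H ≤ IsoCls K := by
  haveI : Fact q.Prime := ⟨hq⟩
  obtain ⟨y, hy⟩ := exists_prime_orderOf_dvd_card' (G := K) q hdvd
  have hLK : Subgroup.zpowers (y : G) ≤ K := Subgroup.zpowers_le.mpr y.2
  have hcL : Nat.card (Subgroup.zpowers (y : G)) = q := by
    rw [Nat.card_zpowers, Subgroup.orderOf_coe, hy]
  have h2 := isoCls_le hLK
  rwa [isoCls_eq_of_prime hq hcL hH] at h2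

theorem pure_card_pow {H : Subgroup G} {q : ℕ} (hq : q.Prime) (hH : Nat.card H = q)
    {x : IsoClasses G} (hx : PureAbove (IsoCls H) x) :
    clsCard x = q ^ (clsCard x).factorization q ∧ 1 ≤ (clsCard x).factorization q := by
  obtain ⟨K, rfl⟩ := exists_isoCls x
  have hKpos : Nat.card K ≠ 0 := Nat.card_pos.ne'
  have hdvd : q ∣ Nat.card K := by
    have h2 := clsCard_dvd_of_le hx.1
    rwa [clsCard_mk, clsCard_mk, hH] at h2
  have hall : ∀ r : ℕ, r.Prime → r ∣ Nat.card K → r = q := by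
    intro r hr hrd
    haveI : Fact r.Prime := ⟨hr⟩
    obtain ⟨y, hy⟩ := exists_prime_orderOf_dvd_card' (G := K) r hrd
    have hLK : Subgroup.zpowers (y : G) ≤ K := Subgroup.zpowers_le.mpr y.2
    have hcL : Nat.card (Subgroup.zpowers (y : G)) = r := by
      rw [Nat.card_zpowers, Subgroup.orderOf_coe, hy]
    have h3 := hx.2 _ (isAt_of_prime hr hcL) (isoCls_le hLK)
    have h4 := card_eq_of_isoCls_eq h3
    rw [hcL, hH] at h4
    exact h4
  constructor
  · rw [clsCard_mk]
    exact eq_pow_factorization_of_unique_prime hKpos hq hall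
  · rw [clsCard_mk]
    exact (Nat.Prime.pow_dvd_iff_le_factorization hq hKpos).mp (by rwa [pow_one])

theorem hasChain_le {H : Subgroup G} {q : ℕ} (hq : q.Prime) (hH : Nat.card H = q)
    {m : ℕ} (hc : HasChain (IsoCls H) m) : m ≤ (Nat.card G).factorization q := by
  obtain ⟨c, hlt, hpure⟩ := hc
  have hpow := fun i => pure_card_pow hq hH (hpure i)
  have key : ∀ n (hn : n < m), n + 1 ≤ (clsCard (c ⟨n, hn⟩)).factorization q := by
    intro n
    induction n with
    | zero => intro hn; exact (hpow _).2
    | succ n ih =>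
      intro hn
      have hn' : n < m := Nat.lt_of_succ_lt hn
      have h1 := ih hn'
      have hij : (⟨n, hn'⟩ : Fin m) < ⟨n + 1, hn⟩ := by
        simp [Fin.lt_def]
      obtain ⟨hle, hne⟩ := hlt _ _ hij
      have hdvd : clsCard (c ⟨n, hn'⟩) ∣ clsCard (c ⟨n + 1, hn⟩) := clsCard_dvd_of_le hle
      have hcne : clsCard (c ⟨n, hn'⟩) ≠ clsCard (c ⟨n + 1, hn⟩) := by
        intro hcc
        exact hne (eq_of_le_of_clsCard_le hle hcc.ge)
      rw [(hpow ⟨n, hn'⟩).1, (hpow ⟨n + 1, hn⟩).1] at hdvd hcne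
      have hle2 := (Nat.pow_dvd_pow_iff_le_right hq.one_lt).mp hdvd
      have hne2 : (clsCard (c ⟨n, hn'⟩)).factorization q ≠
          (clsCard (c ⟨n + 1, hn⟩)).factorization q := fun h => hcne (by rw [h])
      omega
  rcases Nat.eq_zero_or_pos m with rfl | hm
  · exact Nat.zero_le _
  · have hmlt : m - 1 < m := Nat.sub_lt hm Nat.one_pos
    have h1 := key (m - 1) hmlt
    have h2 : q ^ m ∣ clsCard (c ⟨m - 1, hmlt⟩) := by
      rw [(hpow ⟨m - 1, hmlt⟩).1]
      exact pow_dvd_pow q (by omega)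
    have h3 : q ^ m ∣ Nat.card G := h2.trans (clsCard_dvd_card _)
    exact (Nat.Prime.pow_dvd_iff_le_factorization hq Nat.card_pos.ne').mp h3

theorem hasChain_of {H : Subgroup G} {q : ℕ} (hq : q.Prime) (hH : Nat.card H = q) :
    HasChain (IsoCls H) ((Nat.card G).factorization q) := by
  haveI : Fact q.Prime := ⟨hq⟩
  have hG0 : Nat.card G ≠ 0 := Nat.card_pos.ne'
  have claim : ∀ m, m ≤ (Nat.card G).factorization q →
      ∃ c : Fin (m + 1) → Subgroup G,
        (∀ i, Nat.card (c i) = q ^ (i : ℕ)) ∧ (∀ i j, i ≤ j → c i ≤ c j) := by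
    intro m
    induction m with
    | zero =>
      intro _
      refine ⟨fun _ => ⊥, fun i => ?_, fun i j _ => le_rfl⟩
      have : (i : ℕ) = 0 := Nat.lt_one_iff.mp i.isLt
      rw [this, pow_zero, Subgroup.card_bot]
    | succ m ih =>
      intro hm
      obtain ⟨c, hcard, hmono⟩ := ih (le_trans (Nat.le_succ m) hm)
      have hdvd : q ^ (m + 1) ∣ Nat.card G :=
        (Nat.Prime.pow_dvd_iff_le_factorization hq hG0).mpr hm
      obtain ⟨K, hK, hle⟩ := Sylow.exists_subgroup_card_pow_prime_le q hdvd
        (c (Fin.last m)) (by rw [hcard, Fin.val_last]) (Nat.le_succ m)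
      refine ⟨Fin.snoc c K, ?_, ?_⟩
      · intro i
        rcases Fin.eq_castSucc_or_eq_last i with ⟨j, rfl⟩ | rfl
        · rw [Fin.snoc_castSucc]
          simpa using hcard j
        · rw [Fin.snoc_last, hK, Fin.val_last]
      · intro i j hij
        rcases Fin.eq_castSucc_or_eq_last j with ⟨j', rfl⟩ | rfl
        · rcases Fin.eq_castSucc_or_eq_last i with ⟨i', rfl⟩ | rfl
          · rw [Fin.snoc_castSucc, Fin.snoc_castSucc]
            exact hmono _ _ (Fin.castSucc_le_castSucc_iff.mp hij)
          · exact absurd hij (by simp [Fin.le_def, Fin.lt_def]; have := j'.isLt; omega)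
        · rw [Fin.snoc_last]
          rcases Fin.eq_castSucc_or_eq_last i with ⟨i', rfl⟩ | rfl
          · rw [Fin.snoc_castSucc]
            exact le_trans (hmono i' (Fin.last m) (Fin.le_last i')) hle
          · rw [Fin.snoc_last]
  obtain ⟨c, hcard, hmono⟩ := claim _ le_rfl
  refine ⟨fun i => IsoCls (c i.succ), ?_, ?_⟩
  · intro i j hij
    constructor
    · exact isoCls_le (hmono _ _ (Fin.succ_le_succ_iff.mpr hij.le))
    · intro heq
      have h2 := card_eq_of_isoCls_eq heq
      rw [hcard, hcard] at h2
      have h3 := Nat.pow_right_injective hq.two_le h2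
      simp only [Fin.val_succ] at h3
      exact absurd (Fin.val_injective (by omega : (i : ℕ) = (j : ℕ))) hij.ne
  · intro i
    constructor
    · refine cls_le_of_prime_dvd hq hH ?_
      rw [hcard]
      refine dvd_pow_self q ?_
      simp [Fin.val_succ]
    · intro b hb hbx
      obtain ⟨L, r, hr, hL, hLb⟩ := exists_prime_of_isAt hb
      have hdvd : r ∣ q ^ ((i.succ : Fin _) : ℕ) := by
        have h2 := clsCard_dvd_of_le hbx
        rw [← hLb, clsCard_mk, hL, clsCard_mk, hcard] at h2
        exact h2
      have hrq : r = q := (Nat.prime_dvd_prime_iff_eq hr hq).mp (hr.dvd_of_dvd_pow hdvd)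
      rw [← hLb]
      exact isoCls_eq_of_prime hq (by rw [hL, hrq]) hH

end IsoClassesFacts

/-- The key transfer step: an order isomorphism of the posets of isomorphism classes
matches a prime `r` of `G₁` with a prime `s` of `G₂` of the same multiplicity. -/
theorem step_lemma {G₁ : Type*} [Group G₁] [Finite G₁] {G₂ : Type*} [Group G₂] [Finite G₂]
    (f : IsoClasses G₁ ≃o IsoClasses G₂) {H : Subgroup G₁} {r : ℕ}
    (hr : r.Prime) (hH : Nat.card H = r) :
    ∃ (K : Subgroup G₂) (s : ℕ), s.Prime ∧ Nat.card K = s ∧ f (IsoCls H) = IsoCls K ∧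
      (Nat.card G₂).factorization s = (Nat.card G₁).factorization r := by
  have hatom : IsAt (f (IsoCls H)) := isAt_map f (isAt_of_prime hr hH)
  obtain ⟨K, s, hs, hK, hKf⟩ := exists_prime_of_isAt hatom
  refine ⟨K, s, hs, hK, hKf.symm, le_antisymm ?_ ?_⟩
  · have h2 : HasChain (IsoCls K) ((Nat.card G₂).factorization s) := hasChain_of hs hK
    rw [hKf] at h2
    have h3 := hasChain_map f.symm h2
    rw [f.symm_apply_apply] at h3
    exact hasChain_le hr hH h3
  · have h2 := hasChain_map f (hasChain_of hr hH)
    rw [← hKf] at h2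
    exact hasChain_le hs hK h2

/-- If `IsoClasses G₁` and `IsoClasses G₂` are order isomorphic and
`|G₁| = p₁^α₁ ⋯ p_k^α_k` with `p₁, …, p_k` distinct primes and each `α_i ≥ 1`, then
`|G₂| = q₁^α₁ ⋯ q_k^α_k` for some distinct primes `q₁, …, q_k`; equivalently, there is a
bijection between the prime divisors of `|G₁|` and those of `|G₂|` preserving
multiplicities. -/
theorem card_factorization_of_isoClasses_orderIso
    (G₁ : Type*) [Group G₁] [Finite G₁] (G₂ : Type*) [Group G₂] [Finite G₂]
    (h : Nonempty (IsoClasses G₁ ≃o IsoClasses G₂))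
    (k : ℕ) (p α : Fin k → ℕ) (hp : ∀ i, (p i).Prime) (hpinj : Function.Injective p)
    (hα : ∀ i, 1 ≤ α i) (hcard : Nat.card G₁ = ∏ i, p i ^ α i) :
    (∃ q : Fin k → ℕ, (∀ i, (q i).Prime) ∧ Function.Injective q ∧
        Nat.card G₂ = ∏ i, q i ^ α i) ∧
      ∃ σ : (Nat.card G₁).primeFactors ≃ (Nat.card G₂).primeFactors,
        ∀ r : (Nat.card G₁).primeFactors,
          (Nat.card G₁).factorization r = (Nat.card G₂).factorization (σ r) := by
  classical
  obtain ⟨f⟩ := h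
  have hn₁ : Nat.card G₁ ≠ 0 := Nat.card_pos.ne'
  have hn₂ : Nat.card G₂ ≠ 0 := Nat.card_pos.ne'
  -- pick a subgroup of each prime order
  have pick₁ : ∀ r : (Nat.card G₁).primeFactors, ∃ H : Subgroup G₁, Nat.card H = r := by
    rintro ⟨r, hr⟩
    rw [Nat.mem_primeFactors] at hr
    haveI : Fact r.Prime := ⟨hr.1⟩
    obtain ⟨y, hy⟩ := exists_prime_orderOf_dvd_card' r hr.2.1
    exact ⟨Subgroup.zpowers y, by rw [Nat.card_zpowers, hy]⟩
  have pick₂ : ∀ t : (Nat.card G₂).primeFactors, ∃ H : Subgroup G₂, Nat.card H = t := by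
    rintro ⟨t, ht⟩
    rw [Nat.mem_primeFactors] at ht
    haveI : Fact t.Prime := ⟨ht.1⟩
    obtain ⟨y, hy⟩ := exists_prime_orderOf_dvd_card' t ht.2.1
    exact ⟨Subgroup.zpowers y, by rw [Nat.card_zpowers, hy]⟩
  choose A hA using pick₁
  choose B hB using pick₂
  have hprime₁ : ∀ r : (Nat.card G₁).primeFactors, (r : ℕ).Prime :=
    fun r => Nat.prime_of_mem_primeFactors r.2
  have hprime₂ : ∀ t : (Nat.card G₂).primeFactors, (t : ℕ).Prime :=
    fun t => Nat.prime_of_mem_primeFactors t.2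
  choose K s hs hK hfK hfact using
    fun r : (Nat.card G₁).primeFactors => step_lemma f (hprime₁ r) (hA r)
  choose K' s' hs' hK' hfK' hfact' using
    fun t : (Nat.card G₂).primeFactors => step_lemma f.symm (hprime₂ t) (hB t)
  have hsmem : ∀ r, s r ∈ (Nat.card G₂).primeFactors := by
    intro r
    rw [Nat.mem_primeFactors]
    exact ⟨hs r, (hK r) ▸ Subgroup.card_subgroup_dvd_card (K r), hn₂⟩
  have hsmem' : ∀ t, s' t ∈ (Nat.card G₁).primeFactors := by
    intro t
    rw [Nat.mem_primeFactors]
    exact ⟨hs' t, (hK' t) ▸ Subgroup.card_subgroup_dvd_card (K' t), hn₁⟩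
  set Φ : (Nat.card G₁).primeFactors → (Nat.card G₂).primeFactors :=
    fun r => ⟨s r, hsmem r⟩ with hΦ
  set Ψ : (Nat.card G₂).primeFactors → (Nat.card G₁).primeFactors :=
    fun t => ⟨s' t, hsmem' t⟩ with hΨ
  have left_inv : ∀ r, Ψ (Φ r) = r := by
    intro r
    -- `B (Φ r)` and `K r` both have prime order `s r`
    have e1 : IsoCls (B (Φ r)) = IsoCls (K r) :=
      isoCls_eq_of_prime (hs r) (hB (Φ r)) (hK r)
    have e2 : f.symm (IsoCls (B (Φ r))) = IsoCls (A r) := by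
      rw [e1, ← hfK r, f.symm_apply_apply]
    have e3 : IsoCls (K' (Φ r)) = IsoCls (A r) := by
      rw [← hfK' (Φ r), e2]
    have e4 := card_eq_of_isoCls_eq e3
    rw [hK' (Φ r), hA r] at e4
    exact Subtype.ext e4
  have right_inv : ∀ t, Φ (Ψ t) = t := by
    intro t
    have e1 : IsoCls (A (Ψ t)) = IsoCls (K' t) :=
      isoCls_eq_of_prime (hs' t) (hA (Ψ t)) (hK' t)
    have e2 : f (IsoCls (A (Ψ t))) = IsoCls (B t) := by
      rw [e1, ← hfK' t, f.apply_symm_apply]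
    have e3 : IsoCls (K (Ψ t)) = IsoCls (B t) := by
      rw [← hfK (Ψ t), e2]
    have e4 := card_eq_of_isoCls_eq e3
    rw [hK (Ψ t), hB t] at e4
    exact Subtype.ext e4
  set σ : (Nat.card G₁).primeFactors ≃ (Nat.card G₂).primeFactors :=
    ⟨Φ, Ψ, left_inv, right_inv⟩ with hσ
  have hmult : ∀ r : (Nat.card G₁).primeFactors,
      (Nat.card G₁).factorization r = (Nat.card G₂).factorization (σ r) :=
    fun r => (hfact r).symm
  refine ⟨?_, σ, hmult⟩
  -- now the explicit form
  have hfactp : ∀ j, (Nat.card G₁).factorization (p j) = α j := by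
    intro j
    rw [hcard, Nat.factorization_prod (fun i _ => pow_ne_zero _ (hp i).pos.ne')]
    rw [Finset.sum_apply']
    rw [Finset.sum_eq_single j]
    · rw [Nat.Prime.factorization_pow (hp j), Finsupp.single_eq_same]
    · intro i _ hne
      rw [Nat.Prime.factorization_pow (hp i),
        Finsupp.single_eq_of_ne' (fun hh => hne (hpinj hh))]
    · intro hj; exact absurd (Finset.mem_univ j) hj
  have hpmem : ∀ j, p j ∈ (Nat.card G₁).primeFactors := by
    intro j
    rw [Nat.mem_primeFactors]
    refine ⟨hp j, ?_, hn₁⟩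
    rw [hcard]
    exact dvd_trans (dvd_pow_self _ (by have := hα j; omega : α j ≠ 0))
      (Finset.dvd_prod_of_mem _ (Finset.mem_univ j))
  set q : Fin k → ℕ := fun j => (σ ⟨p j, hpmem j⟩ : ℕ) with hq
  have hqprime : ∀ j, (q j).Prime := fun j => hprime₂ (σ ⟨p j, hpmem j⟩)
  have hqinj : Function.Injective q := by
    intro j j' hjj
    have h2 : σ ⟨p j, hpmem j⟩ = σ ⟨p j', hpmem j'⟩ := Subtype.coe_injective hjj
    have h3 := σ.injective h2
    exact hpinj (congrArg Subtype.val h3)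
  have hfactq : ∀ j, (Nat.card G₂).factorization (q j) = α j := by
    intro j
    rw [← hmult ⟨p j, hpmem j⟩]
    exact hfactp j
  have hsupp₂ : (Nat.card G₂).primeFactors = Finset.image q Finset.univ := by
    ext t
    constructor
    · intro ht
      have hrp : ((σ.symm ⟨t, ht⟩ : { x // x ∈ (Nat.card G₁).primeFactors }) : ℕ).Prime :=
        Nat.prime_of_mem_primeFactors (σ.symm ⟨t, ht⟩).2
      have hrd : ((σ.symm ⟨t, ht⟩ : { x // x ∈ (Nat.card G₁).primeFactors }) : ℕ) ∣
          ∏ i, p i ^ α i := by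
        rw [← hcard]
        exact Nat.dvd_of_mem_primeFactors (σ.symm ⟨t, ht⟩).2
      obtain ⟨i, -, hi⟩ := hrp.prime.exists_mem_finset_dvd hrd
      have hieq : ((σ.symm ⟨t, ht⟩ : (Nat.card G₁).primeFactors) : ℕ) = p i :=
        (Nat.prime_dvd_prime_iff_eq hrp (hp i)).mp (hrp.dvd_of_dvd_pow hi)
      rw [Finset.mem_image]
      refine ⟨i, Finset.mem_univ i, ?_⟩
      have h4 : (⟨p i, hpmem i⟩ : { x // x ∈ (Nat.card G₁).primeFactors }) = σ.symm ⟨t, ht⟩ :=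
        Subtype.ext hieq.symm
      have h5 : σ ⟨p i, hpmem i⟩ = ⟨t, ht⟩ := by rw [h4, σ.apply_symm_apply]
      show (σ ⟨p i, hpmem i⟩ : ℕ) = t
      rw [h5]
    · intro ht
      rw [Finset.mem_image] at ht
      obtain ⟨j, -, rfl⟩ := ht
      exact (σ ⟨p j, hpmem j⟩).2
  refine ⟨q, hqprime, hqinj, ?_⟩
  conv_lhs => rw [← Nat.factorization_prod_pow_eq_self hn₂]
  rw [Finsupp.prod, Nat.support_factorization, hsupp₂,
    Finset.prod_image (fun a _ b _ hab => hqinj hab)]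
  exact Finset.prod_congr rfl (fun j _ => by rw [hfactq j])
end

section
/- Let G₁ and G₂ be finite groups of coprime orders. Then the poset Iso(G₁ × G₂) is order isomorphic to the product poset Iso(G₁) × Iso(G₂), where the product carries the componentwise order. -/
section Aux

lemma isoCls_eq_iff {G : Type*} [Group G] {H K : Subgroup G} :
    IsoCls H = IsoCls K ↔ Nonempty (H ≃* K) :=
  ⟨fun h => Quotient.exact h, fun h => Quotient.sound h⟩

/-- product of subgroup isomorphisms -/
noncomputable def subgroupProdIso {G₁ G₂ : Type*} [Group G₁] [Group G₂]
    {A A' : Subgroup G₁} {B B' : Subgroup G₂} (eA : A ≃* A') (eB : B ≃* B') :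
    (A.prod B) ≃* (A'.prod B') :=
  (Subgroup.prodEquiv A B).trans ((eA.prodCongr eB).trans (Subgroup.prodEquiv A' B').symm)

/-- Decomposition of subgroups of a product of groups of coprime orders. -/
lemma subgroup_decomp {G₁ G₂ : Type*} [Group G₁] [Group G₂] [Finite G₁] [Finite G₂]
    (hcop : Nat.Coprime (Nat.card G₁) (Nat.card G₂)) (H : Subgroup (G₁ × G₂)) :
    H = (H.map (MonoidHom.fst G₁ G₂)).prod (H.map (MonoidHom.snd G₁ G₂)) := by
  obtain ⟨k, hk1, hk2⟩ := Nat.chineseRemainder hcop 1 0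
  obtain ⟨l, hl1, hl2⟩ := Nat.chineseRemainder hcop 0 1
  apply le_antisymm
  · intro x hx
    exact ⟨⟨x, hx, rfl⟩, ⟨x, hx, rfl⟩⟩
  · intro x hx
    rw [Subgroup.mem_prod] at hx
    obtain ⟨⟨y, hy, hy1⟩, ⟨z, hz, hz1⟩⟩ := hx
    have h1 : y ^ k = (x.1, 1) := by
      have hfst : y.1 ^ k = y.1 ^ 1 := by
        apply pow_eq_pow_iff_modEq.2
        exact (hk1.of_dvd (orderOf_dvd_natCard y.1)).symm.symm
      have hsnd : y.2 ^ k = y.2 ^ 0 := by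
        apply pow_eq_pow_iff_modEq.2
        exact hk2.of_dvd (orderOf_dvd_natCard y.2)
      ext
      · simpa using (hfst.trans (pow_one _)).trans hy1
      · simpa using hsnd.trans (pow_zero _)
    have h2 : z ^ l = (1, x.2) := by
      have hfst : z.1 ^ l = z.1 ^ 0 := by
        apply pow_eq_pow_iff_modEq.2
        exact hl1.of_dvd (orderOf_dvd_natCard z.1)
      have hsnd : z.2 ^ l = z.2 ^ 1 := by
        apply pow_eq_pow_iff_modEq.2
        exact hl2.of_dvd (orderOf_dvd_natCard z.2)
      ext
      · simpa using hfst.trans (pow_zero _)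
      · simpa using (hsnd.trans (pow_one _)).trans hz1
    have : (x.1, (1 : G₂)) * ((1 : G₁), x.2) ∈ H := by
      rw [← h1, ← h2]; exact mul_mem (pow_mem hy k) (pow_mem hz l)
    simpa using this

/-- Splitting an isomorphism of products of groups of coprime orders: left part. -/
lemma split_left {A B C D : Type*} [Group A] [Group B] [Group C] [Group D]
    [Finite A] [Finite B] [Finite C] [Finite D]
    (hAD : Nat.Coprime (Nat.card A) (Nat.card D))
    (hCB : Nat.Coprime (Nat.card C) (Nat.card B))
    (e : (A × B) ≃* (C × D)) : Nonempty (A ≃* C) := by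
  have key1 : ∀ a : A, (e (a, 1)).2 = 1 := by
    intro a
    have hpow : (e (a, 1)).2 ^ Nat.card A = 1 := by
      have : (e (a, 1)) ^ Nat.card A = 1 := by
        rw [← map_pow, Prod.pow_mk, pow_card_eq_one', one_pow, Prod.mk_one_one, map_one]
      simpa [Prod.pow_def] using congrArg Prod.snd this
    have h1 : orderOf (e (a, 1)).2 ∣ Nat.card A := orderOf_dvd_of_pow_eq_one hpow
    have h2 : orderOf (e (a, 1)).2 ∣ Nat.card D := orderOf_dvd_natCard _
    have : orderOf (e (a, 1)).2 = 1 :=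
      Nat.eq_one_of_dvd_one (hAD ▸ Nat.dvd_gcd h1 h2)
    exact orderOf_eq_one_iff.mp this
  have key2 : ∀ c : C, (e.symm (c, 1)).2 = 1 := by
    intro c
    have hpow : (e.symm (c, 1)).2 ^ Nat.card C = 1 := by
      have : (e.symm (c, 1)) ^ Nat.card C = 1 := by
        rw [← map_pow, Prod.pow_mk, pow_card_eq_one', one_pow, Prod.mk_one_one, map_one]
      simpa [Prod.pow_def] using congrArg Prod.snd this
    have h1 : orderOf (e.symm (c, 1)).2 ∣ Nat.card C := orderOf_dvd_of_pow_eq_one hpow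
    have h2 : orderOf (e.symm (c, 1)).2 ∣ Nat.card B := orderOf_dvd_natCard _
    have : orderOf (e.symm (c, 1)).2 = 1 :=
      Nat.eq_one_of_dvd_one (hCB ▸ Nat.dvd_gcd h1 h2)
    exact orderOf_eq_one_iff.mp this
  refine ⟨{ toFun := fun a => (e (a, 1)).1,
            invFun := fun c => (e.symm (c, 1)).1,
            left_inv := ?_, right_inv := ?_, map_mul' := ?_ }⟩
  · intro a
    have h : (((e (a, 1)).1, (1 : D)) : C × D) = e (a, 1) := by
      ext
      · rfl
      · exact (key1 a).symm
    dsimp only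
    rw [h, e.symm_apply_apply]
  · intro c
    have h : (((e.symm (c, 1)).1, (1 : B)) : A × B) = e.symm (c, 1) := by
      ext
      · rfl
      · exact (key2 c).symm
    dsimp only
    rw [h, e.apply_symm_apply]
  · intro a a'
    have h : ((a * a', (1 : B)) : A × B) = (a, 1) * (a', 1) := by simp
    show (e (a * a', 1)).1 = (e (a, 1)).1 * (e (a', 1)).1
    rw [h, map_mul, Prod.fst_mul]

lemma split_right {A B C D : Type*} [Group A] [Group B] [Group C] [Group D]
    [Finite A] [Finite B] [Finite C] [Finite D]
    (hBC : Nat.Coprime (Nat.card B) (Nat.card C))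
    (hDA : Nat.Coprime (Nat.card D) (Nat.card A))
    (e : (A × B) ≃* (C × D)) : Nonempty (B ≃* D) :=
  split_left hBC hDA ((MulEquiv.prodComm (M := B) (N := A)).trans (e.trans MulEquiv.prodComm))

end Aux

section Main

variable {G₁ : Type*} [Group G₁] {G₂ : Type*} [Group G₂]

/-- the map from the product poset to `IsoClasses (G₁ × G₂)` -/
noncomputable def pairToCls : IsoClasses G₁ × IsoClasses G₂ → IsoClasses (G₁ × G₂) :=
  fun p => Quotient.liftOn₂ p.1 p.2 (fun A B => IsoCls (A.prod B))
    (fun _ _ _ _ hA hB => Quotient.sound ⟨subgroupProdIso hA.some hB.some⟩)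

lemma pairToCls_mk (A : Subgroup G₁) (B : Subgroup G₂) :
    pairToCls (IsoCls A, IsoCls B) = IsoCls (A.prod B) := rfl

variable [Finite G₁] [Finite G₂]

lemma split_subgroups (hcop : Nat.Coprime (Nat.card G₁) (Nat.card G₂))
    {A C : Subgroup G₁} {B D : Subgroup G₂}
    (e : (A.prod B) ≃* (C.prod D)) : Nonempty (A ≃* C) ∧ Nonempty (B ≃* D) := by
  have e' : (↥A × ↥B) ≃* (↥C × ↥D) :=
    (Subgroup.prodEquiv A B).symm.trans (e.trans (Subgroup.prodEquiv C D))
  constructor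
  · exact split_left
      ((hcop.coprime_dvd_left (Subgroup.card_subgroup_dvd_card A)).coprime_dvd_right
        (Subgroup.card_subgroup_dvd_card D))
      ((hcop.coprime_dvd_left (Subgroup.card_subgroup_dvd_card C)).coprime_dvd_right
        (Subgroup.card_subgroup_dvd_card B)) e'
  · exact split_right
      ((hcop.symm.coprime_dvd_left (Subgroup.card_subgroup_dvd_card B)).coprime_dvd_right
        (Subgroup.card_subgroup_dvd_card C))
      ((hcop.symm.coprime_dvd_left (Subgroup.card_subgroup_dvd_card D)).coprime_dvd_right
        (Subgroup.card_subgroup_dvd_card A)) e'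

lemma pairToCls_injective (hcop : Nat.Coprime (Nat.card G₁) (Nat.card G₂)) :
    Function.Injective (pairToCls (G₁ := G₁) (G₂ := G₂)) := by
  rintro ⟨a, b⟩ ⟨c, d⟩ h
  induction a using Quotient.inductionOn with | h A =>
  induction b using Quotient.inductionOn with | h B =>
  induction c using Quotient.inductionOn with | h C =>
  induction d using Quotient.inductionOn with | h D =>
  rw [show (⟦A⟧ : IsoClasses G₁) = IsoCls A from rfl, show (⟦B⟧ : IsoClasses G₂) = IsoCls B from rfl,
      show (⟦C⟧ : IsoClasses G₁) = IsoCls C from rfl, show (⟦D⟧ : IsoClasses G₂) = IsoCls D from rfl,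
      pairToCls_mk, pairToCls_mk] at h
  obtain ⟨e⟩ := isoCls_eq_iff.mp h
  obtain ⟨⟨e1⟩, ⟨e2⟩⟩ := split_subgroups hcop e
  exact Prod.ext (Quotient.sound ⟨e1⟩) (Quotient.sound ⟨e2⟩)

lemma pairToCls_surjective (hcop : Nat.Coprime (Nat.card G₁) (Nat.card G₂)) :
    Function.Surjective (pairToCls (G₁ := G₁) (G₂ := G₂)) := by
  intro x
  induction x using Quotient.inductionOn with | h H =>
  refine ⟨(IsoCls (H.map (MonoidHom.fst G₁ G₂)), IsoCls (H.map (MonoidHom.snd G₁ G₂))), ?_⟩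
  rw [pairToCls_mk, ← subgroup_decomp hcop H]
  rfl

lemma pairToCls_le_iff (hcop : Nat.Coprime (Nat.card G₁) (Nat.card G₂))
    (p q : IsoClasses G₁ × IsoClasses G₂) :
    pairToCls p ≤ pairToCls q ↔ p ≤ q := by
  obtain ⟨a, b⟩ := p
  obtain ⟨c, d⟩ := q
  induction a using Quotient.inductionOn with | h A =>
  induction b using Quotient.inductionOn with | h B =>
  induction c using Quotient.inductionOn with | h C =>
  induction d using Quotient.inductionOn with | h D =>
  show pairToCls (IsoCls A, IsoCls B) ≤ pairToCls (IsoCls C, IsoCls D) ↔ _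
  rw [pairToCls_mk, pairToCls_mk]
  constructor
  · rintro ⟨H, K, hH, hK, hle⟩
    obtain ⟨eH⟩ := isoCls_eq_iff.mp hH
    obtain ⟨eK⟩ := isoCls_eq_iff.mp hK
    -- decompose H and K
    have hHd := subgroup_decomp hcop H
    have hKd := subgroup_decomp hcop K
    have eH' : ((H.map (MonoidHom.fst G₁ G₂)).prod (H.map (MonoidHom.snd G₁ G₂))) ≃* A.prod B :=
      (MulEquiv.subgroupCongr hHd.symm).trans eH
    have eK' : ((K.map (MonoidHom.fst G₁ G₂)).prod (K.map (MonoidHom.snd G₁ G₂))) ≃* C.prod D :=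
      (MulEquiv.subgroupCongr hKd.symm).trans eK
    obtain ⟨⟨e1⟩, ⟨e2⟩⟩ := split_subgroups hcop eH'
    obtain ⟨⟨f1⟩, ⟨f2⟩⟩ := split_subgroups hcop eK'
    constructor
    · exact ⟨H.map (MonoidHom.fst G₁ G₂), K.map (MonoidHom.fst G₁ G₂),
        Quotient.sound ⟨e1⟩, Quotient.sound ⟨f1⟩, Subgroup.map_mono hle⟩
    · exact ⟨H.map (MonoidHom.snd G₁ G₂), K.map (MonoidHom.snd G₁ G₂),
        Quotient.sound ⟨e2⟩, Quotient.sound ⟨f2⟩, Subgroup.map_mono hle⟩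
  · rintro ⟨⟨A', C', hA, hC, hac⟩, ⟨B', D', hB, hD, hbd⟩⟩
    obtain ⟨eA⟩ := isoCls_eq_iff.mp hA
    obtain ⟨eB⟩ := isoCls_eq_iff.mp hB
    obtain ⟨eC⟩ := isoCls_eq_iff.mp hC
    obtain ⟨eD⟩ := isoCls_eq_iff.mp hD
    exact ⟨A'.prod B', C'.prod D',
      Quotient.sound ⟨subgroupProdIso eA eB⟩,
      Quotient.sound ⟨subgroupProdIso eC eD⟩,
      Subgroup.prod_mono hac hbd⟩

end Main

/-- If `G₁` and `G₂` are finite groups of coprime orders, then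
`IsoClasses (G₁ × G₂)` is order isomorphic to the product poset
`IsoClasses G₁ × IsoClasses G₂` with the componentwise order. -/
theorem isoClasses_prod_orderIso_of_coprime
    (G₁ : Type*) [Group G₁] [Finite G₁] (G₂ : Type*) [Group G₂] [Finite G₂]
    (hcop : Nat.Coprime (Nat.card G₁) (Nat.card G₂)) :
    Nonempty (IsoClasses (G₁ × G₂) ≃o IsoClasses G₁ × IsoClasses G₂) := by
  refine ⟨OrderIso.symm ⟨Equiv.ofBijective pairToCls
    ⟨pairToCls_injective hcop, pairToCls_surjective hcop⟩, ?_⟩⟩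
  intro p q
  exact pairToCls_le_iff hcop p q
end
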